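/- If [[x, y], [0, z]] is an integer matrix with x odd, xz = m, 0 ≤ y < z, gcd(x, y, z) = 1, then for any matrix [[1, 0], [2, 1]], the product [[x, y], [0, z]]·[[1, 0], [2, 1]] = [[x+2y, y], [2z, z]] can be brought, by left multiplication by an element of Γ₀(2) = {[[a,b],[c,d]] ∈ SL(2,ℤ) : 2 | c} and an integer upper-triangular translation, to a matrix of the form [[g, y'], [0, m/g]] with g odd, g | m, and 0 ≤ y' < m/g. -/

import Mathlib

set_option maxHeartbeats 1000000 in
/-- If `[[x,y],[0,z]]` is an integer matrix with `x` odd, `xz = m`, `0 ≤ y < z` and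
`gcd(x,y,z) = 1`, then the product `[[x,y],[0,z]]·[[1,0],[2,1]]` can be brought, by
left multiplication by an element `r` of `Γ₀(2) ⊆ SL(2,ℤ)` and by an upper
triangular integer translation `[[1,t],[0,1]]`, to a matrix `[[g,y'],[0,m/g]]` with
`g` odd, `g ∣ m`, `0 ≤ y' < m/g`, and coprime entries. -/
theorem gamma0_closure_step (m x y z : ℤ) (hm : 0 < m) (hxz : x * z = m) (hx : Odd x)
    (hy0 : 0 ≤ y) (hyz : y < z) (hgcd : Int.gcd (Int.gcd x y) z = 1) :
    ∃ (r : Matrix (Fin 2) (Fin 2) ℤ) (t g y' : ℤ),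
      r.det = 1 ∧ 2 ∣ r 1 0 ∧ Odd g ∧ g ∣ m ∧ 0 ≤ y' ∧ y' < m / g ∧
      Int.gcd (Int.gcd g y') (m / g) = 1 ∧
      !![(1 : ℤ), t; 0, 1] * (r * (!![x, y; 0, z] * !![(1 : ℤ), 0; 2, 1]))
        = !![g, y'; 0, m / g] := by
  set s : ℤ := x + 2 * y with hsdef
  have hsodd : Odd s := by obtain ⟨k, hk⟩ := hx; exact ⟨k + y, by omega⟩
  have hsne : s ≠ 0 := by rintro h; obtain ⟨k, hk⟩ := hsodd; omega
  set g : ℤ := (Int.gcd s (2 * z) : ℤ) with hgdef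
  have hgs : g ∣ s := Int.gcd_dvd_left s (2 * z)
  have hg2z : g ∣ 2 * z := Int.gcd_dvd_right s (2 * z)
  have hgne : g ≠ 0 := by
    simp only [hgdef, ne_eq, Int.natCast_eq_zero, Int.gcd_eq_zero_iff]
    rintro ⟨h, -⟩; exact hsne h
  have hgpos : 0 < g := lt_of_le_of_ne (Int.natCast_nonneg _) (Ne.symm hgne)
  have hgodd : Odd g := by
    rcases Int.even_or_odd g with he | ho
    · exfalso
      have hes : Even s := by
        obtain ⟨c, hc⟩ := hgs
        obtain ⟨k, hk⟩ := he
        exact ⟨k * c, by rw [hc, hk]; ring⟩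
      obtain ⟨u, hu⟩ := hes
      obtain ⟨j, hj⟩ := hsodd
      omega
    · exact ho
  have hgz : g ∣ z := by
    obtain ⟨c, hc⟩ := hg2z
    have hec : Even c := by
      have h1 : Even (g * c) := ⟨z, by rw [← hc]; ring⟩
      rcases Int.even_mul.mp h1 with h | h
      · exact absurd h (Int.not_even_iff_odd.mpr hgodd)
      · exact h
    obtain ⟨u, hu⟩ := hec
    refine ⟨u, ?_⟩
    have h2 : 2 * z = 2 * (g * u) := by rw [hc, hu]; ring
    linarith
  obtain ⟨s', hs'⟩ := id hgs
  obtain ⟨z', hz'⟩ := id hgz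
  set a : ℤ := Int.gcdA s (2 * z) with hadef
  set b : ℤ := Int.gcdB s (2 * z) with hbdef
  have hbez : g = s * a + 2 * z * b := Int.gcd_eq_gcd_ab s (2 * z)
  have hbez' : a * s' + 2 * b * z' = 1 := by
    have h : g * (a * s' + 2 * b * z') = g * 1 := by
      linear_combination (-1 : ℤ) * hbez + (-a) * hs' + (-2 * b) * hz'
    exact mul_left_cancel₀ hgne h
  set q : ℤ := x * z' with hqdef
  have hq : m = g * q := by rw [← hxz, hqdef, hz']; ring
  have hmg : m / g = q := by rw [hq]; exact Int.mul_ediv_cancel_left _ hgne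
  have hqpos : 0 < q := by nlinarith
  set w : ℤ := a * y + b * z with hwdef
  set y' : ℤ := w % q with hy'def
  set t : ℤ := -(w / q) with htdef
  have hy'0 : 0 ≤ y' := Int.emod_nonneg w (ne_of_gt hqpos)
  have hy'q : y' < q := Int.emod_lt_of_pos w hqpos
  have hwy' : y' = w + t * q := by rw [hy'def, htdef, Int.emod_def]; ring
  refine ⟨!![a, b; -(2 * z'), s'], t, g, y', ?_, ?_, hgodd, ⟨q, hq⟩, hy'0, ?_, ?_, ?_⟩
  · rw [Matrix.det_fin_two_of]; linarith [hbez']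
  · have h10 : (!![a, b; -(2 * z'), s'] : Matrix (Fin 2) (Fin 2) ℤ) 1 0 = -(2 * z') := by
      norm_num
    rw [h10]; exact ⟨-z', by ring⟩
  · rw [hmg]; exact hy'q
  · -- coprimality
    rw [hmg]
    set D : ℕ := Int.gcd (Int.gcd g y' : ℤ) q with hDdef
    have hDg : (D : ℤ) ∣ g := dvd_trans (Int.gcd_dvd_left (Int.gcd g y' : ℤ) q) (Int.gcd_dvd_left g y')
    have hDy' : (D : ℤ) ∣ y' := dvd_trans (Int.gcd_dvd_left (Int.gcd g y' : ℤ) q) (Int.gcd_dvd_right g y')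
    have hDq : (D : ℤ) ∣ q := Int.gcd_dvd_right (Int.gcd g y' : ℤ) q
    have hDw : (D : ℤ) ∣ w := by
      have : w = y' - t * q := by rw [hwy']; ring
      rw [this]; exact dvd_sub hDy' (Dvd.dvd.mul_left hDq t)
    have hyid : y = s' * w - b * q := by
      have h1 : s' * z = s * z' := by
        calc s' * z = s' * (g * z') := by rw [← hz']
        _ = (g * s') * z' := by ring
        _ = s * z' := by rw [← hs']
      linear_combination (-y) * hbez' + (-b) * h1 + (-b * z') * hsdef
    have hDy : (D : ℤ) ∣ y := by
      rw [hyid]; exact dvd_sub (Dvd.dvd.mul_left hDw s') (Dvd.dvd.mul_left hDq b)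
    have hDx : (D : ℤ) ∣ x := by
      have : x = s - 2 * y := by rw [hsdef]; ring
      rw [this]; exact dvd_sub (dvd_trans hDg hgs) (Dvd.dvd.mul_left hDy 2)
    have hDz : (D : ℤ) ∣ z := dvd_trans hDg hgz
    have : (D : ℤ) ∣ ((Int.gcd (Int.gcd x y : ℤ) z : ℕ) : ℤ) :=
      Int.dvd_coe_gcd (Int.dvd_coe_gcd hDx hDy) hDz
    rw [hgcd] at this
    have hD1 : D ∣ 1 := by exact_mod_cast this
    exact Nat.dvd_one.mp hD1
  · -- matrix identity
    rw [hmg]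
    ext i j
    fin_cases i <;> fin_cases j <;>
      simp [Matrix.mul_apply, Fin.sum_univ_succ, Matrix.cons_val_zero, Matrix.cons_val_one]
    · linear_combination (-1 : ℤ) * hbez + (-a + 2 * t * z') * hsdef + (-2 * t * z') * hs' +
        (2 * t * s') * hz'
    · linear_combination (-1 : ℤ) * hwy' + (-1 : ℤ) * hwdef + (-t) * hqdef + (t * s') * hz' +
        (-t * z') * hs' + (t * z') * hsdef
    · linear_combination (2 * z' : ℤ) * hsdef + (-2 * z') * hs' + (2 * s') * hz'
    · linear_combination (-1 : ℤ) * hqdef + (s' : ℤ) * hz' + (-z') * hs' + (z' : ℤ) * hsdef
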